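/- For every complex number s with Re(s) > 3/2, one has Σ_{q=1}^{∞} ρ_q(0)/q^{s} = ζ(s)·ζ(2s−1)/ζ(2s), where ζ is the Riemann zeta function; equivalently, the generalized Dirichlet L-function 𝓛_0(s) := (ζ(2s)/ζ(s)) · Σ_{q=1}^{∞} ρ_q(0)/q^{s} equals ζ(2s−1). -/

import Mathlib

/-- `ρ_q(n) = #{x (mod 2q) : x² ≡ n (mod 4q)}`. -/
def rho (q : ℕ) (n : ℤ) : ℕ :=
  ((Finset.range (2 * q)).filter (fun x : ℕ => ((4 * q : ℕ) : ℤ) ∣ ((x : ℤ) ^ 2 - n))).card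

open LSeries ArithmeticFunction Finset Complex
open scoped LSeries.notation ArithmeticFunction.Moebius

noncomputable section

namespace RhoAux

/-- μ-weighted indicator of squares. -/
def gf : ℕ → ℂ := fun n => if n.sqrt ^ 2 = n then ((μ n.sqrt : ℤ) : ℂ) else 0

/-- sqrt-weighted indicator of squares. -/
def hf : ℕ → ℂ := fun n => if n.sqrt ^ 2 = n then (n.sqrt : ℂ) else 0

/-- indicator of squarefree numbers. -/
def sf : ℕ → ℂ := fun n => if Squarefree n then 1 else 0

lemma sq_inj : Function.Injective (fun e : ℕ => e ^ 2) :=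
  Nat.pow_left_injective two_ne_zero

lemma gf_sq (e : ℕ) : gf (e ^ 2) = ((μ e : ℤ) : ℂ) := by
  simp [gf, Nat.sqrt_eq']

lemma hf_sq (e : ℕ) : hf (e ^ 2) = (e : ℂ) := by
  simp [hf, Nat.sqrt_eq']

lemma gf_nonsq {n : ℕ} (h : n ∉ Set.range (fun e : ℕ => e ^ 2)) : gf n = 0 := by
  rw [gf, if_neg]
  exact fun hc => h ⟨n.sqrt, hc⟩

lemma hf_nonsq {n : ℕ} (h : n ∉ Set.range (fun e : ℕ => e ^ 2)) : hf n = 0 := by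
  rw [hf, if_neg]
  exact fun hc => h ⟨n.sqrt, hc⟩

lemma cast_sq_cpow (e : ℕ) (s : ℂ) : ((e ^ 2 : ℕ) : ℂ) ^ s = (e : ℂ) ^ (2 * s) := by
  have h0 : ((e : ℂ)).arg = 0 := Complex.natCast_arg
  have h := Complex.cpow_nat_mul' (x := (e : ℂ)) (n := 2)
    (by rw [h0]; simpa using Real.pi_pos) (by rw [h0]; simpa using Real.pi_pos.le) s
  push_cast
  rw [show ((2 : ℕ) : ℂ) = (2 : ℂ) by norm_num] at h
  rw [← h]

lemma term_gf (s : ℂ) (e : ℕ) : term gf s (e ^ 2) = term ↗μ (2 * s) e := by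
  rcases eq_or_ne e 0 with rfl | he
  · simp [LSeries.term]
  · rw [LSeries.term_of_ne_zero (pow_ne_zero 2 he), LSeries.term_of_ne_zero he, gf_sq,
      cast_sq_cpow]

lemma term_hf (s : ℂ) (e : ℕ) : term hf s (e ^ 2) = term 1 (2 * s - 1) e := by
  rcases eq_or_ne e 0 with rfl | he
  · simp [LSeries.term]
  · rw [LSeries.term_of_ne_zero (pow_ne_zero 2 he), LSeries.term_of_ne_zero he, hf_sq,
      cast_sq_cpow, Pi.one_apply]
    have hce : (e : ℂ) ≠ 0 := Nat.cast_ne_zero.mpr he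
    have h2 : (e : ℂ) ^ (2 * s - 1) ≠ 0 := by
      simp [Complex.cpow_eq_zero_iff, hce]
    rw [show (2 * s) = (2 * s - 1) + 1 by ring, Complex.cpow_add _ _ hce, Complex.cpow_one]
    field_simp
    rw [add_sub_cancel_right, div_self h2]

lemma term_gf_off (s : ℂ) : ∀ x ∉ Set.range (fun e : ℕ => e ^ 2), term gf s x = 0 := by
  intro x hx
  rcases eq_or_ne x 0 with rfl | h0
  · simp [LSeries.term]
  · rw [LSeries.term_of_ne_zero h0, gf_nonsq hx, zero_div]

lemma term_hf_off (s : ℂ) : ∀ x ∉ Set.range (fun e : ℕ => e ^ 2), term hf s x = 0 := by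
  intro x hx
  rcases eq_or_ne x 0 with rfl | h0
  · simp [LSeries.term]
  · rw [LSeries.term_of_ne_zero h0, hf_nonsq hx, zero_div]

lemma LSeriesSummable_gf {s : ℂ} (h : 1 < (2 * s).re) : LSeriesSummable gf s := by
  have h1 : Summable fun e => term gf s (e ^ 2) := by
    have := (ArithmeticFunction.LSeriesSummable_moebius_iff.mpr h)
    exact this.congr fun e => (term_gf s e).symm
  exact (sq_inj.summable_iff (term_gf_off s)).mp h1

lemma LSeriesSummable_hf {s : ℂ} (h : 1 < (2 * s - 1).re) : LSeriesSummable hf s := by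
  have h1 : Summable fun e => term hf s (e ^ 2) := by
    have := (LSeriesSummable_one_iff.mpr h)
    exact this.congr fun e => (term_hf s e).symm
  exact (sq_inj.summable_iff (term_hf_off s)).mp h1

lemma LSeries_gf {s : ℂ} (h : 1 < (2 * s).re) : LSeries gf s = (riemannZeta (2 * s))⁻¹ := by
  have h1 : LSeries gf s = LSeries ↗μ (2 * s) := by
    rw [LSeries, LSeries,
      ← sq_inj.tsum_eq (f := term gf s) (Function.support_subset_iff'.mpr (term_gf_off s))]
    exact tsum_congr (term_gf s)
  have hz := LSeries_zeta_mul_Lseries_moebius h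
  rw [LSeries_zeta_eq_riemannZeta h] at hz
  rw [h1]
  exact eq_inv_of_mul_eq_one_right hz

lemma LSeries_hf {s : ℂ} (h : 1 < (2 * s - 1).re) :
    LSeries hf s = riemannZeta (2 * s - 1) := by
  have h1 : LSeries hf s = LSeries 1 (2 * s - 1) := by
    rw [LSeries, LSeries,
      ← sq_inj.tsum_eq (f := term hf s) (Function.support_subset_iff'.mpr (term_hf_off s))]
    exact tsum_congr (term_hf s)
  rw [h1, LSeries_one_eq_riemannZeta h]

lemma sq_dvd_iff {m d e : ℕ} (hm : Squarefree m) (hm0 : m ≠ 0) (hd : d ≠ 0) :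
    e ^ 2 ∣ d ^ 2 * m ↔ e ∣ d := by
  constructor
  · intro hdvd
    rcases eq_or_ne e 0 with rfl | he
    · exfalso
      have h0 : (0 : ℕ) ∣ d ^ 2 * m := by simpa using hdvd
      exact (mul_ne_zero (pow_ne_zero 2 hd) hm0) (Nat.eq_zero_of_zero_dvd h0)
    · rw [← Nat.factorization_le_iff_dvd he hd, Finsupp.le_def]
      intro p
      have h1 := (Nat.factorization_le_iff_dvd (pow_ne_zero 2 he)
        (mul_ne_zero (pow_ne_zero 2 hd) hm0)).mpr hdvd
      rw [Finsupp.le_def] at h1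
      have h2 := h1 p
      rw [Nat.factorization_pow, Nat.factorization_mul (pow_ne_zero 2 hd) hm0,
        Nat.factorization_pow] at h2
      simp only [Finsupp.coe_add, Finsupp.coe_smul, Pi.add_apply, Pi.smul_apply,
        smul_eq_mul] at h2
      have h3 := (Nat.squarefree_iff_factorization_le_one hm0).mp hm p
      omega
  · intro hdvd
    exact dvd_mul_of_dvd_left (pow_dvd_pow_of_dvd hdvd 2) m

lemma cm_dvd {c m x : ℕ} (hm : Squarefree m) (hm0 : m ≠ 0) (hc : c ≠ 0)
    (h : c ^ 2 * m ∣ x ^ 2) : c * m ∣ x := by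
  rcases eq_or_ne x 0 with rfl | hx
  · exact dvd_zero _
  · rw [← Nat.factorization_le_iff_dvd (mul_ne_zero hc hm0) hx, Finsupp.le_def]
    intro p
    have h1 := (Nat.factorization_le_iff_dvd (mul_ne_zero (pow_ne_zero 2 hc) hm0)
      (pow_ne_zero 2 hx)).mpr h
    rw [Finsupp.le_def] at h1
    have h2 := h1 p
    rw [Nat.factorization_mul (pow_ne_zero 2 hc) hm0, Nat.factorization_pow,
      Nat.factorization_pow] at h2
    rw [Nat.factorization_mul hc hm0]
    simp only [Finsupp.coe_add, Finsupp.coe_smul, Pi.add_apply, Pi.smul_apply,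
      smul_eq_mul] at h2 ⊢
    have h3 := (Nat.squarefree_iff_factorization_le_one hm0).mp hm p
    omega

lemma sf_sq_unique {b f m d : ℕ} (hb : Squarefree b) (hm : Squarefree m)
    (hb0 : b ≠ 0) (hf0 : f ≠ 0) (hm0 : m ≠ 0) (hd0 : d ≠ 0)
    (h : b * f ^ 2 = m * d ^ 2) : f = d ∧ b = m := by
  have key : ∀ p : ℕ, b.factorization p + 2 * f.factorization p
      = m.factorization p + 2 * d.factorization p := by
    intro p
    have h1 : (b * f ^ 2).factorization = (m * d ^ 2).factorization := by rw [h]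
    rw [Nat.factorization_mul hb0 (pow_ne_zero 2 hf0),
      Nat.factorization_mul hm0 (pow_ne_zero 2 hd0), Nat.factorization_pow,
      Nat.factorization_pow] at h1
    have h2 := congrArg (fun F : ℕ →₀ ℕ => F p) h1
    simpa using h2
  have hb1 := (Nat.squarefree_iff_factorization_le_one hb0).mp hb
  have hm1 := (Nat.squarefree_iff_factorization_le_one hm0).mp hm
  constructor
  · exact Nat.eq_of_factorization_eq hf0 hd0 fun p => by
      have := key p; have := hb1 p; have := hm1 p; omega
  · exact Nat.eq_of_factorization_eq hb0 hm0 fun p => by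
      have := key p; have := hb1 p; have := hm1 p; omega

lemma sum_gf_divisors {n m d : ℕ} (hn : n ≠ 0) (hmd : d ^ 2 * m = n) (hm : Squarefree m) :
    ∑ v ∈ n.divisors, gf v = if d = 1 then 1 else 0 := by
  have hd : d ≠ 0 := by
    rintro rfl; rw [← hmd] at hn; simp at hn
  have hm0 : m ≠ 0 := by
    rintro rfl; rw [← hmd] at hn; simp at hn
  have key : ∑ v ∈ n.divisors, gf v = ∑ e ∈ d.divisors, ((μ e : ℤ) : ℂ) := by
    rw [← Finset.sum_filter_of_ne (p := fun v => v.sqrt ^ 2 = v)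
      (fun v _ hv => by by_contra hc; exact hv (if_neg hc))]
    refine Finset.sum_nbij' (i := fun v => v.sqrt) (j := fun e => e ^ 2) ?_ ?_ ?_ ?_ ?_
    · intro v hv
      rw [Finset.mem_filter, Nat.mem_divisors] at hv
      rw [Nat.mem_divisors]
      refine ⟨?_, hd⟩
      rw [← sq_dvd_iff hm hm0 hd, hv.2, hmd]
      exact hv.1.1
    · intro e he
      rw [Nat.mem_divisors] at he
      rw [Finset.mem_filter, Nat.mem_divisors]
      exact ⟨⟨by rw [← hmd]; exact (sq_dvd_iff hm hm0 hd).mpr he.1, hn⟩, by rw [Nat.sqrt_eq']⟩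
    · intro v hv
      rw [Finset.mem_filter] at hv
      exact hv.2
    · intro e _
      simp [Nat.sqrt_eq']
    · intro v hv
      rw [Finset.mem_filter] at hv
      rw [gf, if_pos hv.2]
  rw [key]
  have h1 : ∑ e ∈ d.divisors, ((μ e : ℤ) : ℂ) = ((∑ e ∈ d.divisors, μ e : ℤ) : ℂ) := by
    push_cast
    rfl
  have h2 : ∑ e ∈ d.divisors, μ e = (1 : ArithmeticFunction ℤ) d := by
    rw [← ArithmeticFunction.moebius_mul_coe_zeta, ArithmeticFunction.coe_mul_zeta_apply]
  rw [h1, h2, ArithmeticFunction.one_apply]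
  split <;> simp_all

lemma one_conv_gf : (1 : ℕ → ℂ) ⍟ gf = sf := by
  funext n
  rcases eq_or_ne n 0 with rfl | hn
  · rw [LSeries.convolution_map_zero]
    simp [sf, not_squarefree_zero]
  · obtain ⟨m, d, hmd, hm⟩ := Nat.sq_mul_squarefree n
    have hd : d ≠ 0 := by rintro rfl; rw [← hmd] at hn; simp at hn
    rw [LSeries.convolution_def]
    simp only [Pi.one_apply, one_mul]
    rw [Nat.sum_divisorsAntidiagonal' (f := fun _ v => gf v),
      sum_gf_divisors hn hmd hm]
    by_cases hd1 : d = 1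
    · subst hd1
      simp only [one_pow, one_mul] at hmd
      subst hmd
      rw [if_pos rfl, sf, if_pos hm]
    · rw [if_neg hd1, sf, if_neg]
      intro hsf
      apply hd1
      rw [Nat.isUnit_iff.mp (hsf d (by rw [← hmd]; exact Dvd.intro m (by ring)))]

lemma rho_eq {n m d : ℕ} (hn : n ≠ 0) (hmd : d ^ 2 * m = n) (hm : Squarefree m) :
    rho n 0 = d := by
  have hd : d ≠ 0 := by rintro rfl; rw [← hmd] at hn; simp at hn
  have hm0 : m ≠ 0 := by rintro rfl; rw [← hmd] at hn; simp at hn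
  have h2dm : (2 * d * m : ℕ) ≠ 0 := by positivity
  have hdiv : ∀ x : ℕ, ((4 * n : ℕ) : ℤ) ∣ ((x : ℤ) ^ 2 - 0) ↔ 2 * d * m ∣ x := by
    intro x
    rw [sub_zero, show ((x : ℤ) ^ 2) = ((x ^ 2 : ℕ) : ℤ) by push_cast; ring,
      Int.natCast_dvd_natCast]
    have h4n : 4 * n = (2 * d) ^ 2 * m := by rw [← hmd]; ring
    rw [h4n]
    constructor
    · intro hx
      exact cm_dvd hm hm0 (by positivity) hx
    · rintro ⟨y, rfl⟩
      exact ⟨m * y ^ 2, by ring⟩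
  rw [rho]
  have hset : (Finset.range (2 * n)).filter
        (fun x : ℕ => ((4 * n : ℕ) : ℤ) ∣ ((x : ℤ) ^ 2 - 0))
      = (Finset.range d).image (fun i => i * (2 * d * m)) := by
    ext x
    simp only [Finset.mem_filter, Finset.mem_range, Finset.mem_image]
    rw [hdiv x]
    constructor
    · rintro ⟨hlt, i, rfl⟩
      refine ⟨i, ?_, mul_comm i _⟩
      have h2n : 2 * n = (2 * d * m) * d := by rw [← hmd]; ring
      rw [h2n] at hlt
      exact lt_of_mul_lt_mul_left hlt (Nat.zero_le _)
    · rintro ⟨i, hi, rfl⟩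
      constructor
      · have h2n : 2 * n = d * (2 * d * m) := by rw [← hmd]; ring
        rw [h2n]
        exact (Nat.mul_lt_mul_right (Nat.pos_of_ne_zero h2dm)).mpr hi
      · exact Dvd.dvd.mul_left dvd_rfl i
  rw [hset, Finset.card_image_of_injective _ (mul_left_injective₀ h2dm),
    Finset.card_range]

lemma sf_conv_hf : sf ⍟ hf = fun n => (rho n 0 : ℂ) := by
  funext n
  rcases eq_or_ne n 0 with rfl | hn
  · rw [LSeries.convolution_map_zero]
    simp [rho]
  · obtain ⟨m, d, hmd, hm⟩ := Nat.sq_mul_squarefree n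
    have hd : d ≠ 0 := by rintro rfl; rw [← hmd] at hn; simp at hn
    have hm0 : m ≠ 0 := by rintro rfl; rw [← hmd] at hn; simp at hn
    rw [LSeries.convolution_def]
    beta_reduce
    rw [Finset.sum_eq_single_of_mem (m, d ^ 2)
      (by rw [Nat.mem_divisorsAntidiagonal]; exact ⟨by rw [← hmd]; ring, hn⟩) ?_]
    · rw [hf_sq, show sf m = 1 from if_pos hm, rho_eq hn hmd hm, one_mul]
    · rintro ⟨b, c⟩ hmem hne
      rw [Nat.mem_divisorsAntidiagonal] at hmem
      by_cases hsfb : Squarefree b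
      · by_cases hsq : c.sqrt ^ 2 = c
        · exfalso
          have hb0 : b ≠ 0 := by rintro rfl; exact hn (by simpa using hmem.1.symm)
          have hc0 : c ≠ 0 := by rintro rfl; exact hn (by simpa using hmem.1.symm)
          have hf0 : c.sqrt ≠ 0 := by
            intro h0; rw [h0] at hsq; simp at hsq; exact hc0 hsq.symm
          have hbf : b * c.sqrt ^ 2 = m * d ^ 2 := by
            rw [hsq, hmem.1, ← hmd]; ring
          obtain ⟨hfd, hbm⟩ := sf_sq_unique hsfb hm hb0 hf0 hm0 hd hbf
          apply hne
          have : c = d ^ 2 := by rw [← hsq, hfd]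
          rw [hbm, this]
        · rw [show hf c = 0 from if_neg hsq, mul_zero]
      · rw [show sf b = 0 from if_neg hsfb, zero_mul]

end RhoAux

end


theorem rho_zero_dirichlet_series (s : ℂ) (hs : 3 / 2 < s.re) :
    (∑' q : ℕ, (rho (q + 1) 0 : ℂ) / ((q + 1 : ℕ) : ℂ) ^ s
      = riemannZeta s * riemannZeta (2 * s - 1) / riemannZeta (2 * s)) ∧
    (riemannZeta (2 * s) / riemannZeta s) *
        ∑' q : ℕ, (rho (q + 1) 0 : ℂ) / ((q + 1 : ℕ) : ℂ) ^ s
      = riemannZeta (2 * s - 1) := by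
  have hs1 : 1 < s.re := by linarith
  have h2re : (2 * s).re = 2 * s.re := by
    simp [Complex.mul_re]
  have hs2 : 1 < (2 * s).re := by rw [h2re]; linarith
  have hs3 : 1 < (2 * s - 1).re := by
    rw [Complex.sub_re, Complex.one_re, h2re]; linarith
  have Sg : LSeriesSummable RhoAux.gf s := RhoAux.LSeriesSummable_gf hs2
  have Sh : LSeriesSummable RhoAux.hf s := RhoAux.LSeriesSummable_hf hs3
  have S1 : LSeriesSummable 1 s := LSeriesSummable_one_iff.mpr hs1
  have Ssf : LSeriesSummable RhoAux.sf s := RhoAux.one_conv_gf ▸ S1.convolution Sg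
  have Srho : LSeriesSummable (fun n => (rho n 0 : ℂ)) s :=
    RhoAux.sf_conv_hf ▸ Ssf.convolution Sh
  have hLrho : LSeries (fun n => (rho n 0 : ℂ)) s
      = riemannZeta s * (riemannZeta (2 * s))⁻¹ * riemannZeta (2 * s - 1) := by
    rw [← RhoAux.sf_conv_hf, LSeries_convolution' Ssf Sh, ← RhoAux.one_conv_gf,
      LSeries_convolution' S1 Sg, LSeries_one_eq_riemannZeta hs1,
      RhoAux.LSeries_gf hs2, RhoAux.LSeries_hf hs3]
  have htsum : ∑' q : ℕ, (rho (q + 1) 0 : ℂ) / ((q + 1 : ℕ) : ℂ) ^ s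
      = LSeries (fun n => (rho n 0 : ℂ)) s := by
    have h0 : ∑' q : ℕ, (rho (q + 1) 0 : ℂ) / ((q + 1 : ℕ) : ℂ) ^ s
        = ∑' q : ℕ, LSeries.term (fun n => (rho n 0 : ℂ)) s (q + 1) :=
      tsum_congr fun q => by rw [LSeries.term_of_ne_zero (Nat.succ_ne_zero q)]
    have h1 := Summable.sum_add_tsum_nat_add (f := LSeries.term (fun n => (rho n 0 : ℂ)) s) 1 Srho
    rw [Finset.sum_range_one, LSeries.term_zero, zero_add] at h1
    rw [h0, LSeries]
    exact h1
  have hz1 : riemannZeta s ≠ 0 := riemannZeta_ne_zero_of_one_lt_re hs1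
  have hz2 : riemannZeta (2 * s) ≠ 0 := riemannZeta_ne_zero_of_one_lt_re hs2
  constructor
  · rw [htsum, hLrho]
    field_simp
  · rw [htsum, hLrho]
    field_simp
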